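/- Let G be a finite simple graph and v a vertex of G. If Ω is a potential maximal clique of the induced subgraph G \ {v}, then exactly one of the two sets Ω and Ω ∪ {v} is a potential maximal clique of G. -/

import Mathlib

open scoped Classical

namespace PaperECC

variable {V : Type*}

/-- `nbhd G X` is N(X): vertices outside `X` with a neighbor in `X`. -/
def nbhd (G : SimpleGraph V) (X : Set V) : Set V :=
  {v | v ∉ X ∧ ∃ u ∈ X, G.Adj u v}

/-- `closedNbhd G X` is N[X] = X ∪ N(X). -/
def closedNbhd (G : SimpleGraph V) (X : Set V) : Set V :=
  X ∪ nbhd G X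

/-- closed neighborhood N[v] of a single vertex. -/
def vNbhd (G : SimpleGraph V) (v : V) : Set V :=
  insert v (G.neighborSet v)

/-- `IsCompOf G X C`: `C` is the vertex set of a connected component of `G \ X`. -/
def IsCompOf (G : SimpleGraph V) (X C : Set V) : Prop :=
  C.Nonempty ∧ Disjoint C X ∧ (G.induce C).Connected ∧
    ∀ u ∈ C, ∀ v, v ∉ X → G.Adj u v → v ∈ C

/-- `C` is a full component of `X`: a component of `G \ X` with N(C) = X. -/
def IsFullCompOf (G : SimpleGraph V) (X C : Set V) : Prop :=
  IsCompOf G X C ∧ nbhd G C = X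

/-- `S` is a minimal separator of `G`: it has at least two full components. -/
def IsMinSep (G : SimpleGraph V) (S : Set V) : Prop :=
  ∃ C D : Set V, C ≠ D ∧ IsFullCompOf G S C ∧ IsFullCompOf G S D

/-- `C` is a block of `G`: a component of `G \ N(C)` whose neighborhood is a minimal separator. -/
def IsBlock (G : SimpleGraph V) (C : Set V) : Prop :=
  IsCompOf G (nbhd G C) C ∧ IsMinSep G (nbhd G C)

/-- `H` is chordal: every (injectively embedded) cycle on at least 4 vertices has a chord,
i.e. there is no induced cycle on four or more vertices. -/
def IsChordal (H : SimpleGraph V) : Prop :=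
  ∀ n : ℕ, 4 ≤ n → ∀ f : ZMod n → V, Function.Injective f →
    (∀ i, H.Adj (f i) (f (i + 1))) →
    ∃ i j : ZMod n, i ≠ j ∧ j ≠ i + 1 ∧ i ≠ j + 1 ∧ H.Adj (f i) (f j)

/-- `H` is a triangulation of `G` (on the same vertex set). -/
def IsTri (G H : SimpleGraph V) : Prop :=
  IsChordal H ∧ G ≤ H

/-- `H` is a minimal triangulation of `G`. -/
def IsMinTri (G H : SimpleGraph V) : Prop :=
  IsTri G H ∧ ∀ H' : SimpleGraph V, IsTri G H' → H' ≤ H → H' = H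

/-- `Ω` is a maximal clique of `H`. -/
def IsMaxClique (H : SimpleGraph V) (Ω : Set V) : Prop :=
  H.IsClique Ω ∧ ∀ Ω' : Set V, H.IsClique Ω' → Ω ⊆ Ω' → Ω' = Ω

/-- `Ω` is a potential maximal clique of `G`: a maximal clique of some minimal triangulation. -/
def IsPMC (G : SimpleGraph V) (Ω : Set V) : Prop :=
  ∃ H : SimpleGraph V, IsMinTri G H ∧ IsMaxClique H Ω

/-- `W` is an edge clique cover of `G`: a finite collection of cliques covering all edges. -/
def IsECC (G : SimpleGraph V) (W : Finset (Set V)) : Prop :=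
  (∀ K ∈ W, G.IsClique K) ∧ ∀ u v : V, G.Adj u v → ∃ K ∈ W, u ∈ K ∧ v ∈ K

/-- `W[X]`: the cliques of `W` intersecting the vertex set `X`. -/
noncomputable def meeting (W : Finset (Set V)) (X : Set V) : Finset (Set V) :=
  W.filter (fun K => (K ∩ X).Nonempty)

/-- `V(G, W')`: the vertices all of whose cliques (within `W`) belong to `W'`. -/
def partVerts (W W' : Finset (Set V)) : Set V :=
  {v | ∀ K ∈ W, v ∈ K → K ∈ W'}

/-- The connected components of the subgraph of `G` induced on a vertex set `Y`. -/
def compsOf (G : SimpleGraph V) (Y : Set V) : Set (Set V) :=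
  {C | IsCompOf G Yᶜ C}

/-- `C(W')`: the components of the part `W'` of the edge clique cover `W`. -/
def partComps (G : SimpleGraph V) (W W' : Finset (Set V)) : Set (Set V) :=
  compsOf G (partVerts W W')

/-- `W'` is a good part of `W`: a nonempty subset all of whose components are blocks of `G`. -/
def IsGoodPart (G : SimpleGraph V) (W W' : Finset (Set V)) : Prop :=
  W' ⊆ W ∧ W'.Nonempty ∧ ∀ C ∈ partComps G W W', IsBlock G C

/-- The realization `R(C)` of a block `C`, as a graph supported on `N[C]`:
edges of `G[N[C]]` together with all pairs inside `N(C)`. -/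
def realization (G : SimpleGraph V) (C : Set V) : SimpleGraph V where
  Adj u v := u ≠ v ∧ u ∈ closedNbhd G C ∧ v ∈ closedNbhd G C ∧
    (G.Adj u v ∨ (u ∈ nbhd G C ∧ v ∈ nbhd G C))
  symm := ⟨by
    intro u v h
    exact ⟨h.1.symm, h.2.2.1, h.2.1, h.2.2.2.elim (fun a => Or.inl a.symm)
      (fun a => Or.inr ⟨a.2, a.1⟩)⟩⟩
  loopless := ⟨fun u h => h.1 rfl⟩

/-- The complete graph on the vertex set `Ω` (supported on `Ω`): all pairs inside `Ω`. -/
def cliqueOn (Ω : Set V) : SimpleGraph V where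
  Adj u v := u ≠ v ∧ u ∈ Ω ∧ v ∈ Ω
  symm := ⟨fun u v h => ⟨h.1.symm, h.2.2, h.2.1⟩⟩
  loopless := ⟨fun u h => h.1 rfl⟩

/-- The induced subgraph `G[A]`, as a graph supported on `A`. -/
def inducedOn (G : SimpleGraph V) (A : Set V) : SimpleGraph V where
  Adj u v := G.Adj u v ∧ u ∈ A ∧ v ∈ A
  symm := ⟨fun u v h => ⟨h.1.symm, h.2.2, h.2.1⟩⟩
  loopless := ⟨fun u h => G.ne_of_adj h.1 rfl⟩

/-- All edges of `H` lie inside the vertex set `A` (i.e. `H` has vertex set `A`). -/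
def edgesWithin (H : SimpleGraph V) (A : Set V) : Prop :=
  ∀ u v : V, H.Adj u v → u ∈ A ∧ v ∈ A

/-- `H` is a triangulation of the graph `G'` with vertex set `A`. -/
def IsTriOn (G' : SimpleGraph V) (A : Set V) (H : SimpleGraph V) : Prop :=
  IsChordal H ∧ G' ≤ H ∧ edgesWithin H A

/-- `H` is a minimal triangulation of the graph `G'` with vertex set `A`. -/
def IsMinTriOn (G' : SimpleGraph V) (A : Set V) (H : SimpleGraph V) : Prop :=
  IsTriOn G' A H ∧ ∀ H' : SimpleGraph V, IsTriOn G' A H' → H' ≤ H → H' = H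

/-- `M` is a module of `G`. -/
def IsModule (G : SimpleGraph V) (M : Set V) : Prop :=
  ∀ v ∉ M, (∀ u ∈ M, G.Adj v u) ∨ (∀ u ∈ M, ¬ G.Adj v u)

/-! ### Auxiliary machinery for Statement 7 -/

open SimpleGraph

/-! ### Walk utilities -/

lemma getVert_mem_support {G : SimpleGraph V} {u v : V} (p : G.Walk u v) (n : ℕ) :
    p.getVert n ∈ p.support := by
  induction p generalizing n with
  | nil => simp [SimpleGraph.Walk.getVert]
  | cons h q ih =>
    cases n with
    | zero => simp [SimpleGraph.Walk.getVert]
    | succ n => simp only [SimpleGraph.Walk.getVert_cons_succ, SimpleGraph.Walk.support_cons,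
        List.mem_cons]; exact Or.inr (ih n)

lemma support_drop_subset {G : SimpleGraph V} {u v : V} (p : G.Walk u v) (n : ℕ) :
    (p.drop n).support ⊆ p.support := by
  induction p generalizing n with
  | nil => cases n <;> simp [SimpleGraph.Walk.drop, SimpleGraph.Walk.getVert_of_length_le]
  | cons h q ih =>
    cases n with
    | zero => simp [SimpleGraph.Walk.drop]
    | succ n =>
      intro z hz
      simp only [SimpleGraph.Walk.drop, SimpleGraph.Walk.support_copy] at hz
      simp only [SimpleGraph.Walk.support_cons, List.mem_cons]
      exact Or.inr (ih n hz)

lemma length_drop {G : SimpleGraph V} {u v : V} (p : G.Walk u v) (n : ℕ) :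
    (p.drop n).length = p.length - n := by
  induction p generalizing n with
  | nil => cases n <;> simp [SimpleGraph.Walk.drop, SimpleGraph.Walk.getVert_of_length_le]
  | cons h q ih =>
    cases n with
    | zero => simp [SimpleGraph.Walk.drop]
    | succ n => simp [SimpleGraph.Walk.drop, ih n]

/-- take the first `n` steps of a walk -/
def takeW {G : SimpleGraph V} {u v : V} : (p : G.Walk u v) → (n : ℕ) → G.Walk u (p.getVert n)
  | p, 0 => (SimpleGraph.Walk.nil' u).copy rfl (p.getVert_zero).symm
  | SimpleGraph.Walk.nil, _ + 1 =>
      (SimpleGraph.Walk.nil' u).copy rfl rfl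
  | SimpleGraph.Walk.cons h q, n + 1 =>
      (SimpleGraph.Walk.cons h (takeW q n)).copy rfl (q.getVert_cons_succ h).symm

lemma length_takeW {G : SimpleGraph V} {u v : V} (p : G.Walk u v) (n : ℕ) (hn : n ≤ p.length) :
    (takeW p n).length = n := by
  induction p generalizing n with
  | nil => cases n with
    | zero => simp [takeW]
    | succ n => simp at hn
  | cons h q ih =>
    cases n with
    | zero => simp [takeW]
    | succ n =>
      simp only [SimpleGraph.Walk.length_cons, Nat.add_le_add_iff_right] at hn
      simp [takeW, ih n hn]

lemma support_takeW_subset {G : SimpleGraph V} {u v : V} (p : G.Walk u v) (n : ℕ) :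
    (takeW p n).support ⊆ p.support := by
  induction p generalizing n with
  | nil => cases n <;> simp [takeW]
  | cons h q ih =>
    cases n with
    | zero => intro z hz; simp [takeW] at hz; simp [hz]
    | succ n =>
      intro z hz
      simp only [takeW, SimpleGraph.Walk.support_copy, SimpleGraph.Walk.support_cons,
        List.mem_cons] at hz
      simp only [SimpleGraph.Walk.support_cons, List.mem_cons]
      exact hz.imp id (fun h' => ih n h')

lemma getVert_ne_of_isPath {G : SimpleGraph V} {u v : V} (p : G.Walk u v) (hp : p.IsPath)
    {i j : ℕ} (hij : i < j) (hj : j ≤ p.length) : p.getVert i ≠ p.getVert j := by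
  induction p generalizing i j with
  | nil => simp at hj; omega
  | cons h q ih =>
    rcases (SimpleGraph.Walk.cons_isPath_iff _ _).mp hp with ⟨hq, hus⟩
    cases i with
    | zero =>
      intro he
      simp only [SimpleGraph.Walk.getVert_zero] at he
      obtain ⟨j, rfl⟩ : ∃ j', j = j' + 1 := ⟨j - 1, by omega⟩
      rw [SimpleGraph.Walk.getVert_cons_succ] at he
      exact hus (he ▸ getVert_mem_support q j)
    | succ i =>
      obtain ⟨j, rfl⟩ : ∃ j', j = j' + 1 := ⟨j - 1, by omega⟩
      simp only [SimpleGraph.Walk.getVert_cons_succ]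
      exact ih hq (by omega) (by simpa using hj)


lemma zmod_val_add_one {n : ℕ} [NeZero n] (i : ZMod n) :
    (i + 1).val = (i.val + 1) % n := by
  conv_lhs => rw [← ZMod.natCast_rightInverse i]
  rw [show ((i.val : ZMod n) + 1) = ((i.val + 1 : ℕ) : ZMod n) by push_cast; ring]
  exact ZMod.val_natCast _ _

lemma chordal_cycle_nat {H : SimpleGraph V} (hH : IsChordal H) (n : ℕ) (h4 : 4 ≤ n)
    (g : ℕ → V) (hinj : ∀ i j, i < j → j < n → g i ≠ g j)
    (hadj : ∀ i, i + 1 < n → H.Adj (g i) (g (i + 1)))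
    (hwrap : H.Adj (g (n - 1)) (g 0)) :
    ∃ i j, i + 2 ≤ j ∧ j < n ∧ ¬(i = 0 ∧ j = n - 1) ∧ H.Adj (g i) (g j) := by
  haveI : NeZero n := ⟨by omega⟩
  set f : ZMod n → V := fun z => g z.val with hf
  have hfinj : Function.Injective f := by
    intro z₁ z₂ he
    by_contra hne
    have hv : z₁.val ≠ z₂.val := fun h => hne (ZMod.val_injective n h)
    rcases Nat.lt_or_ge z₁.val z₂.val with h | h
    · exact hinj _ _ h (ZMod.val_lt z₂) he
    · exact hinj _ _ (by omega) (ZMod.val_lt z₁) he.symm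
  have hfcyc : ∀ i : ZMod n, H.Adj (f i) (f (i + 1)) := by
    intro i
    have hv := zmod_val_add_one i
    rcases Nat.lt_or_ge i.val (n - 1) with h | h
    · have : (i + 1).val = i.val + 1 := by rw [hv, Nat.mod_eq_of_lt (by omega)]
      rw [hf]; simp only []; rw [this]
      exact hadj i.val (by omega)
    · have hieq : i.val = n - 1 := by have := ZMod.val_lt i; omega
      have : (i + 1).val = 0 := by rw [hv, hieq]; simp [Nat.sub_add_cancel (by omega : 1 ≤ n)]
      rw [hf]; simp only []; rw [this, hieq]
      exact hwrap
  obtain ⟨i, j, hij, hji1, hij1, hadj'⟩ := hH n h4 f hfinj hfcyc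
  have hcast : ∀ z : ZMod n, ((z.val : ℕ) : ZMod n) = z := fun z => ZMod.natCast_rightInverse z
  -- wlog i.val < j.val
  have key : ∀ i j : ZMod n, i ≠ j → j ≠ i + 1 → i ≠ j + 1 → H.Adj (f i) (f j) →
      i.val < j.val →
      ∃ a b, a + 2 ≤ b ∧ b < n ∧ ¬(a = 0 ∧ b = n - 1) ∧ H.Adj (g a) (g b) := by
    intro i j hij hji1 hij1 hadj' hlt
    refine ⟨i.val, j.val, ?_, ZMod.val_lt j, ?_, hadj'⟩
    · by_contra h
      have : j.val = i.val + 1 := by omega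
      apply hji1
      rw [← hcast j, ← hcast i, this]
      push_cast; ring
    · rintro ⟨h0, h1⟩
      apply hij1
      have hi0 : i = 0 := by rw [← hcast i, h0]; simp
      have hj : j = ((n - 1 : ℕ) : ZMod n) := by rw [← hcast j, h1]
      rw [hi0, hj]
      have : ((n - 1 : ℕ) : ZMod n) + 1 = ((n : ℕ) : ZMod n) := by
        rw [show ((n - 1 : ℕ) : ZMod n) + 1 = ((n - 1 + 1 : ℕ) : ZMod n) by push_cast; ring,
          Nat.sub_add_cancel (by omega : 1 ≤ n)]
      rw [this, ZMod.natCast_self]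
  have hvne : i.val ≠ j.val := fun h => hij (ZMod.val_injective n h)
  rcases Nat.lt_or_ge i.val j.val with h | h
  · exact key i j hij hji1 hij1 hadj' h
  · exact key j i (Ne.symm hij) hij1 hji1 hadj'.symm (by omega)


/-- In a chordal graph, if `D` is connected (with walks inside `D`), disjoint from a clique `K`,
and every vertex of `K` has a neighbor in `D`, then some vertex of `D` is adjacent to all of
`K`. -/
lemma chordal_full [Fintype V] {H : SimpleGraph V} (hH : IsChordal H) (K D : Set V)
    (hDne : D.Nonempty)
    (hconn : ∀ x ∈ D, ∀ y ∈ D, ∃ p : H.Walk x y, ∀ z ∈ p.support, z ∈ D)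
    (hdisj : ∀ z ∈ D, z ∉ K) (hclique : H.IsClique K)
    (hN : ∀ k ∈ K, ∃ w ∈ D, H.Adj w k) :
    ∃ u ∈ D, ∀ k ∈ K, H.Adj u k := by
  -- the weight function
  set wt : V → ℕ := fun u => (Finset.univ.filter (fun k => k ∈ K ∧ H.Adj u k)).card with hwt
  obtain ⟨u, huD, humax⟩ :=
    Finset.exists_max_image D.toFinset wt (by rwa [Set.toFinset_nonempty])
  rw [Set.mem_toFinset] at huD
  refine ⟨u, huD, ?_⟩
  by_contra hcon
  push_neg at hcon
  obtain ⟨a, haK, hua⟩ := hcon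
  obtain ⟨w₀, hw₀D, hw₀a⟩ := hN a haK
  -- minimal length walk from u inside D to a neighbor of a
  have hex : ∃ ℓ : ℕ, ∃ w : V, ∃ p : H.Walk u w,
      (∀ z ∈ p.support, z ∈ D) ∧ H.Adj w a ∧ p.length = ℓ := by
    obtain ⟨q, hq⟩ := hconn u huD w₀ hw₀D
    exact ⟨q.length, w₀, q, hq, hw₀a, rfl⟩
  classical
  set ℓ := Nat.find hex with hℓ
  obtain ⟨w, p₀, hp₀D, hwa, hp₀len⟩ := Nat.find_spec hex
  -- replace by a path
  set pb := p₀.bypass with hpb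
  have hpbD : ∀ z ∈ pb.support, z ∈ D := fun z hz => hp₀D z (p₀.support_bypass_subset hz)
  have hpblen : pb.length = ℓ := by
    have h1 : pb.length ≤ p₀.length := p₀.length_bypass_le
    have h2 : ℓ ≤ pb.length := Nat.find_min' hex ⟨w, pb, hpbD, hwa, rfl⟩
    omega
  have hpbpath : pb.IsPath := p₀.bypass_isPath
  set m := ℓ with hm
  set x : ℕ → V := fun i => pb.getVert i with hx
  have hx0 : x 0 = u := pb.getVert_zero
  have hxm : x m = w := by rw [hx]; simp only []; rw [← hpblen]; exact pb.getVert_length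
  have hxD : ∀ i, x i ∈ D := fun i => hpbD _ (getVert_mem_support pb i)
  have hm1 : 1 ≤ m := by
    by_contra hm0
    have : pb.length = 0 := by omega
    have := SimpleGraph.Walk.eq_of_length_eq_zero this
    exact hua (this ▸ hwa)
  -- no chords on the path
  have P2 : ∀ i j, i + 2 ≤ j → j ≤ m → ¬H.Adj (x i) (x j) := by
    intro i j hij hjm hadj'
    have hq : ∃ w' : V, ∃ q : H.Walk u w',
        (∀ z ∈ q.support, z ∈ D) ∧ H.Adj w' a ∧ q.length = i + 1 + (m - j) := by
      refine ⟨w, (takeW pb i).append ((pb.drop j).cons hadj'), ?_, hwa, ?_⟩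
      · intro z hz
        rw [SimpleGraph.Walk.mem_support_append_iff] at hz
        rcases hz with hz | hz
        · exact hpbD z (support_takeW_subset pb i hz)
        · rw [SimpleGraph.Walk.support_cons, List.mem_cons] at hz
          rcases hz with rfl | hz
          · exact hxD i
          · exact hpbD z (support_drop_subset pb j hz)
      · rw [SimpleGraph.Walk.length_append,
          SimpleGraph.Walk.length_cons, length_takeW pb i (by omega), length_drop]
        omega
    have := Nat.find_min' hex hq
    omega
  -- no earlier neighbor of a on the path
  have P4 : ∀ i, i < m → ¬H.Adj (x i) a := by
    intro i him hadj'
    have hq : ∃ w' : V, ∃ q : H.Walk u w',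
        (∀ z ∈ q.support, z ∈ D) ∧ H.Adj w' a ∧ q.length = i := by
      refine ⟨x i, takeW pb i, ?_, hadj', ?_⟩
      · intro z hz
        exact hpbD z (support_takeW_subset pb i hz)
      · exact length_takeW pb i (by omega)
    have := Nat.find_min' hex hq
    omega
  have Pne : ∀ i j, i < j → j ≤ m → x i ≠ x j := by
    intro i j hij hjm
    exact getVert_ne_of_isPath pb hpbpath hij (by omega)
  -- every common neighbor b of u in K is adjacent to x m
  have inner : ∀ b ∈ K, H.Adj u b → H.Adj (x m) b := by
    intro b hbK hub
    set P : ℕ → Prop := fun t => H.Adj b (x t) with hP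
    have hP0 : P 0 := by rw [hP]; simp only []; rw [hx0]; exact hub.symm
    set i := Nat.findGreatest P m with hi
    have hPi : P i := Nat.findGreatest_spec (Nat.zero_le m) hP0
    have him : i ≤ m := Nat.findGreatest_le m
    have hmax : ∀ t, i < t → t ≤ m → ¬P t := fun t ht htm => Nat.findGreatest_is_greatest ht htm
    rcases Nat.eq_or_lt_of_le him with heq | hlt
    · rw [hP] at hPi; exact (heq ▸ hPi).symm
    -- build the chordless cycle b, x i, ..., x m, a
    exfalso
    set d := m - i with hd
    have hd1 : 1 ≤ d := by omega
    set n' := d + 3 with hn'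
    set g : ℕ → V := fun t => if t = 0 then b else if t ≤ d + 1 then x (i + t - 1) else a with hg
    have hab : a ≠ b := by rintro rfl; exact hua hub
    have hg0 : g 0 = b := by simp [hg]
    have hgmid : ∀ t, 1 ≤ t → t ≤ d + 1 → g t = x (i + t - 1) := by
      intro t h1 h2
      simp only [hg]
      rw [if_neg (by omega), if_pos h2]
    have hglast : g (d + 2) = a := by
      simp only [hg]
      rw [if_neg (by omega), if_neg (by omega)]
    have hginj : ∀ s t, s < t → t < n' → g s ≠ g t := by
      intro s t hst htn
      rcases Nat.eq_zero_or_pos s with rfl | hs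
      · rw [hg0]
        by_cases ht : t ≤ d + 1
        · rw [hgmid t (by omega) ht]
          intro he
          exact hdisj _ (hxD _) (he ▸ hbK)
        · rw [show t = d + 2 by omega, hglast]
          exact fun he => hab he.symm
      · by_cases ht : t ≤ d + 1
        · rw [hgmid s (by omega) (by omega), hgmid t (by omega) ht]
          exact Pne (i + s - 1) (i + t - 1) (by omega) (by omega)
        · rw [hgmid s (by omega) (by omega), show t = d + 2 by omega, hglast]
          intro he
          exact hdisj _ (hxD _) (he.symm ▸ haK)
    have hgadj : ∀ t, t + 1 < n' → H.Adj (g t) (g (t + 1)) := by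
      intro t htn
      rcases Nat.eq_zero_or_pos t with rfl | ht
      · rw [hg0, hgmid 1 le_rfl (by omega)]
        simpa using hPi
      · by_cases ht' : t + 1 ≤ d + 1
        · rw [hgmid t (by omega) (by omega), hgmid (t + 1) (by omega) ht',
            show i + (t + 1) - 1 = (i + t - 1) + 1 by omega]
          exact pb.adj_getVert_succ (by omega)
        · rw [hgmid t (by omega) (by omega), show t + 1 = d + 2 by omega, hglast,
            show i + t - 1 = m by omega, hxm]
          exact hwa
    have hgwrap : H.Adj (g (n' - 1)) (g 0) := by
      rw [show n' - 1 = d + 2 by omega, hglast, hg0]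
      exact hclique haK hbK hab
    obtain ⟨α, β, hαβ, hβn, hnw, hchord⟩ :=
      chordal_cycle_nat hH n' (by omega) g hginj hgadj hgwrap
    rcases Nat.eq_zero_or_pos α with rfl | hα
    · by_cases hβ : β ≤ d + 1
      · rw [hg0, hgmid β (by omega) hβ] at hchord
        exact hmax (i + β - 1) (by omega) (by omega) hchord
      · exact hnw ⟨rfl, by omega⟩
    · by_cases hβ : β ≤ d + 1
      · rw [hgmid α (by omega) (by omega), hgmid β (by omega) hβ] at hchord
        exact P2 (i + α - 1) (i + β - 1) (by omega) (by omega) hchord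
      · rw [hgmid α (by omega) (by omega), show β = d + 2 by omega, hglast] at hchord
        exact P4 (i + α - 1) (by omega) hchord
  -- now x m has strictly larger weight
  have hsub : Finset.univ.filter (fun k => k ∈ K ∧ H.Adj u k) ⊂
      Finset.univ.filter (fun k => k ∈ K ∧ H.Adj (x m) k) := by
    constructor
    · intro k hk
      rw [Finset.mem_filter] at hk ⊢
      exact ⟨hk.1, hk.2.1, inner k hk.2.1 hk.2.2⟩
    · intro hsub'
      have ha' : a ∈ Finset.univ.filter (fun k => k ∈ K ∧ H.Adj (x m) k) := by
        rw [Finset.mem_filter]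
        exact ⟨Finset.mem_univ a, haK, hxm ▸ hwa⟩
      have := hsub' ha'
      rw [Finset.mem_filter] at this
      exact hua this.2.2
  have hlt := Finset.card_lt_card hsub
  have := humax (x m) (Set.mem_toFinset.mpr (hxD m))
  rw [hwt] at this
  simp only [] at this
  omega


lemma zmod_natCast_val {n : ℕ} [NeZero n] (z : ZMod n) : ((z.val : ℕ) : ZMod n) = z :=
  ZMod.natCast_rightInverse z

lemma zmod_val_eq_zero {n : ℕ} [NeZero n] {z : ZMod n} (h : z.val = 0) : z = 0 := by
  rw [← zmod_natCast_val z, h]; simp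

lemma zmod_val_neg {n : ℕ} [NeZero n] (z : ZMod n) (hz : z ≠ 0) : (-z).val = n - z.val := by
  have hzv : z.val ≠ 0 := fun h => hz (zmod_val_eq_zero h)
  have hnzv : (-z).val ≠ 0 := fun h => hz (by simpa using zmod_val_eq_zero h)
  have h1 : ((z.val + (-z).val : ℕ) : ZMod n) = 0 := by
    push_cast
    rw [zmod_natCast_val, zmod_natCast_val]
    ring
  rw [ZMod.natCast_eq_zero_iff] at h1
  have h2 := ZMod.val_lt z
  have h3 := ZMod.val_lt (-z)
  obtain ⟨c, hc⟩ := h1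
  have hcne : c ≠ 0 := by rintro rfl; omega
  have hc2 : c < 2 := by
    by_contra hcc
    push_neg at hcc
    have : n * 2 ≤ n * c := Nat.mul_le_mul_left n hcc
    omega
  have : c = 1 := by omega
  subst this
  omega

/-- every fill edge of a minimal triangulation is the unique chord of a square -/
lemma square_of_fill {G H : SimpleGraph V} (hmin : IsMinTri G H) {s t : V}
    (hadj : H.Adj s t) (hG : ¬G.Adj s t) :
    ∃ a b : V, a ≠ b ∧ a ≠ s ∧ a ≠ t ∧ b ≠ s ∧ b ≠ t ∧
      H.Adj s a ∧ H.Adj a t ∧ H.Adj t b ∧ H.Adj b s ∧ ¬H.Adj a b := by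
  set Hm : SimpleGraph V :=
    { Adj := fun u w => H.Adj u w ∧ ¬(u = s ∧ w = t) ∧ ¬(u = t ∧ w = s)
      symm := ⟨by
        intro u w h
        exact ⟨h.1.symm, fun hc => h.2.2 ⟨hc.2, hc.1⟩, fun hc => h.2.1 ⟨hc.2, hc.1⟩⟩⟩
      loopless := ⟨fun u h => H.loopless.irrefl u h.1⟩ } with hHm
  have hle : Hm ≤ H := fun u w h => h.1
  have hGle : G ≤ Hm := by
    intro u w h
    refine ⟨hmin.1.2 h, ?_, ?_⟩
    · rintro ⟨rfl, rfl⟩; exact hG h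
    · rintro ⟨rfl, rfl⟩; exact hG h.symm
  have hnc : ¬IsChordal Hm := by
    intro hch
    have heq := hmin.2 Hm ⟨hch, hGle⟩ hle
    have : Hm.Adj s t := heq ▸ hadj
    exact this.2.1 ⟨rfl, rfl⟩
  unfold IsChordal at hnc
  push_neg at hnc
  obtain ⟨n, h4, f, hinj, hcyc, hnochord⟩ := hnc
  haveI : NeZero n := ⟨by omega⟩
  have hcycH : ∀ i, H.Adj (f i) (f (i + 1)) := fun i => (hcyc i).1
  -- identify the unique-chord positions
  have hpat : ∀ I J : ZMod n, I ≠ J → J ≠ I + 1 → I ≠ J + 1 → H.Adj (f I) (f J) →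
      (f I = s ∧ f J = t) ∨ (f I = t ∧ f J = s) := by
    intro I J h1 h2 h3 h4'
    have := hnochord I J h1 h2 h3
    by_contra hc
    push_neg at hc
    apply this
    refine ⟨h4', ?_, ?_⟩
    · rintro ⟨hs', ht'⟩; exact hc.1 hs' ht'
    · rintro ⟨hs', ht'⟩; exact hc.2 hs' ht'
  obtain ⟨i₀, j₀, hij, hji1, hij1, hchord⟩ := hmin.1.1 n h4 f hinj hcycH
  obtain ⟨p, q, hfp, hfq, hpq', hqp1, hpq1⟩ :
      ∃ p q : ZMod n, f p = s ∧ f q = t ∧ p ≠ q ∧ q ≠ p + 1 ∧ p ≠ q + 1 := by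
    rcases hpat i₀ j₀ hij hji1 hij1 hchord with ⟨h1, h2⟩ | ⟨h1, h2⟩
    · exact ⟨i₀, j₀, h1, h2, hij, hji1, hij1⟩
    · exact ⟨j₀, i₀, h2, h1, Ne.symm hij, hij1, hji1⟩
  have hpq : ∀ I J : ZMod n, I ≠ J → J ≠ I + 1 → I ≠ J + 1 → H.Adj (f I) (f J) →
      (I = p ∧ J = q) ∨ (I = q ∧ J = p) := by
    intro I J h1 h2 h3 h4'
    rcases hpat I J h1 h2 h3 h4' with ⟨hs', ht'⟩ | ⟨hs', ht'⟩
    · exact Or.inl ⟨hinj (hs'.trans hfp.symm), hinj (ht'.trans hfq.symm)⟩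
    · exact Or.inr ⟨hinj (hs'.trans hfq.symm), hinj (ht'.trans hfp.symm)⟩
  -- the arc lemma
  have arc : ∀ p' q' : ZMod n, (∀ I J : ZMod n, I ≠ J → J ≠ I + 1 → I ≠ J + 1 →
        H.Adj (f I) (f J) → (I = p' ∧ J = q') ∨ (I = q' ∧ J = p')) →
      H.Adj (f q') (f p') → 2 ≤ (q' - p').val → (q' - p').val ≤ n - 2 →
      (q' - p').val = 2 := by
    intro p' q' hpq' hclose hk2 hkn
    set k := (q' - p').val with hk
    by_contra hk3'
    have hk3 : 3 ≤ k := by omega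
    set n' := k + 1 with hn'
    haveI : NeZero n' := ⟨by omega⟩
    have hq'eq : p' + ((k : ℕ) : ZMod n) = q' := by
      rw [hk, zmod_natCast_val]; ring
    set W : ZMod n' → V := fun z => f (p' + ((z.val : ℕ) : ZMod n)) with hW
    have hWinj : Function.Injective W := by
      intro z₁ z₂ he
      have h1 := ZMod.val_lt z₁
      have h2 := ZMod.val_lt z₂
      have := hinj he
      have hcast : ((z₁.val : ℕ) : ZMod n) = ((z₂.val : ℕ) : ZMod n) := by
        have := add_left_cancel this
        exact this
      have hvv : z₁.val % n = z₂.val % n := by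
        have := congrArg ZMod.val hcast
        rwa [ZMod.val_natCast, ZMod.val_natCast] at this
      rw [Nat.mod_eq_of_lt (by omega), Nat.mod_eq_of_lt (by omega)] at hvv
      exact ZMod.val_injective n' (by omega)
    have hWcyc : ∀ z : ZMod n', H.Adj (W z) (W (z + 1)) := by
      intro z
      have hzv := ZMod.val_lt z
      rcases Nat.lt_or_ge z.val k with h | h
      · have h1 : (z + 1).val = z.val + 1 := by
          rw [zmod_val_add_one, Nat.mod_eq_of_lt (by omega)]
        rw [hW]
        simp only []
        rw [h1]
        have : p' + ((z.val + 1 : ℕ) : ZMod n) = (p' + z.val) + 1 := by push_cast; ring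
        rw [this]
        exact hcycH _
      · have hzk : z.val = k := by omega
        have h1 : (z + 1).val = 0 := by
          rw [zmod_val_add_one, hzk]
          simp [hn']
        rw [hW]
        simp only []
        rw [h1, hzk, hq'eq]
        simpa using hclose
    obtain ⟨α, β, hαβ, hβα1, hαβ1, hWchord⟩ := hmin.1.1 n' (by omega) W hWinj hWcyc
    -- translate back
    have hcastinj : ∀ (r : ZMod n) (A B : ℕ), A < n → B < n →
        r + ((A : ℕ) : ZMod n) = r + ((B : ℕ) : ZMod n) → A = B := by
      intro r A B hA hB h
      have h' := add_left_cancel h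
      have := congrArg ZMod.val h'
      rwa [ZMod.val_natCast_of_lt hA, ZMod.val_natCast_of_lt hB] at this
    have key : ∀ α β : ZMod n', α.val < β.val → β ≠ α + 1 → α ≠ β + 1 →
        H.Adj (W α) (W β) → False := by
      intro α β hAB hβα1 hαβ1 hWchord
      set A := α.val with hA
      set B := β.val with hB
      have hAn : A < n' := ZMod.val_lt α
      have hBn : B < n' := ZMod.val_lt β
      have hkn' : k + 2 ≤ n := by omega
      have hBA1 : B ≠ A + 1 := by
        intro h
        apply hβα1
        have : ((A + 1 : ℕ) : ZMod n') = α + 1 := by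
          push_cast; rw [zmod_natCast_val]
        rw [← zmod_natCast_val β, ← hB, h, this]
      have hnAB : ¬(A = 0 ∧ B = k) := by
        rintro ⟨h0, hk'⟩
        apply hαβ1
        have hα0 : α = 0 := zmod_val_eq_zero h0
        have hβk : β = ((k : ℕ) : ZMod n') := by rw [← zmod_natCast_val β, ← hB, hk']
        rw [hα0, hβk]
        have : ((k : ℕ) : ZMod n') + 1 = ((k + 1 : ℕ) : ZMod n') := by push_cast; ring
        rw [this, hn']
        simp
      set I := p' + ((A : ℕ) : ZMod n) with hI
      set J := p' + ((B : ℕ) : ZMod n) with hJ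
      have hI1 : I + 1 = p' + ((A + 1 : ℕ) : ZMod n) := by rw [hI]; push_cast; ring
      have hJ1 : J + 1 = p' + ((B + 1 : ℕ) : ZMod n) := by rw [hJ]; push_cast; ring
      have hIJ : I ≠ J := by
        intro h
        have := hcastinj p' A B (by omega) (by omega) h
        omega
      have hJI1 : J ≠ I + 1 := by
        intro h
        rw [hI1] at h
        have := hcastinj p' B (A + 1) (by omega) (by omega) h
        omega
      have hIJ1 : I ≠ J + 1 := by
        intro h
        rw [hJ1] at h
        have := hcastinj p' A (B + 1) (by omega) (by omega) h
        omega
      have hWadj : H.Adj (f I) (f J) := hWchord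
      rcases hpq' I J hIJ hJI1 hIJ1 hWadj with ⟨h1, h2⟩ | ⟨h1, h2⟩
      · have hA0 : A = 0 :=
          hcastinj p' A 0 (by omega) (by omega) (by rw [← hI, h1]; simp)
        have hBk : B = k := by
          apply hcastinj p' B k (by omega) (by omega)
          rw [← hJ, h2, ← hq'eq]
        exact hnAB ⟨hA0, hBk⟩
      · have hB0 : B = 0 :=
          hcastinj p' B 0 (by omega) (by omega) (by rw [← hJ, h2]; simp)
        omega
    have hvAB : α.val ≠ β.val := fun h => hαβ (ZMod.val_injective n' h)
    rcases Nat.lt_or_ge α.val β.val with h | h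
    · exact key α β h hβα1 hαβ1 hWchord
    · exact key β α (by omega) hαβ1 hβα1 hWchord.symm
  -- bounds on k
  have hsub0 : q - p ≠ 0 := sub_ne_zero.mpr (Ne.symm hpq')
  have hkpos : 0 < (q - p).val := by
    rcases Nat.eq_zero_or_pos (q - p).val with h | h
    · exact absurd (zmod_val_eq_zero h) hsub0
    · exact h
  have hkval : p + (((q - p).val : ℕ) : ZMod n) = q := by rw [zmod_natCast_val]; ring
  have hk1 : (q - p).val ≠ 1 := by
    intro h
    apply hqp1
    have : q - p = ((1 : ℕ) : ZMod n) := by rw [← zmod_natCast_val (q - p), h]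
    rw [show ((1 : ℕ) : ZMod n) = 1 by push_cast; ring] at this
    rw [← sub_eq_iff_eq_add'.mp this]
  have hknm : (q - p).val ≠ n - 1 := by
    intro h
    apply hpq1
    have hneg : (p - q).val = 1 := by
      have : p - q = -(q - p) := by ring
      rw [this, zmod_val_neg _ hsub0, h]
      omega
    have : p - q = ((1 : ℕ) : ZMod n) := by rw [← zmod_natCast_val (p - q), hneg]
    rw [show ((1 : ℕ) : ZMod n) = 1 by push_cast; ring] at this
    rw [← sub_eq_iff_eq_add'.mp this]
  have hkltn : (q - p).val < n := ZMod.val_lt _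
  have hsub0' : p - q ≠ 0 := sub_ne_zero.mpr hpq'
  have hnegval : (p - q).val = n - (q - p).val := by
    have : p - q = -(q - p) := by ring
    rw [this, zmod_val_neg _ hsub0]
  have hk2 : (q - p).val = 2 :=
    arc p q hpq (by rw [hfp, hfq]; exact hadj.symm) (by omega) (by omega)
  have hk2' : (p - q).val = 2 := by
    refine arc q p ?_ (by rw [hfp, hfq]; exact hadj) (by omega) (by omega)
    intro I J h1 h2 h3 h4'
    exact (hpq I J h1 h2 h3 h4').symm
  have hn4 : n = 4 := by omega
  subst hn4
  have hq2 : q = p + 2 := by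
    rw [← hkval, hk2]
    norm_num
  have hne : ∀ x y : ZMod 4, x ≠ y → p + x ≠ p + y := fun x y hxy h => hxy (add_left_cancel h)
  have hne0 : ∀ x : ZMod 4, x ≠ 0 → p + x ≠ p := fun x hx h => hx (by
    have := add_eq_left.mp h
    exact this)
  refine ⟨f (p + 1), f (p + 3), ?_, ?_, ?_, ?_, ?_, ?_, ?_, ?_, ?_, ?_⟩
  · exact fun h => (hne 1 3 (by decide)) (hinj h)
  · rw [← hfp]
    intro h
    exact (hne0 1 (by decide)) (hinj h)
  · rw [← hfq, hq2]
    exact fun h => (hne 1 2 (by decide)) (hinj h)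
  · rw [← hfp]
    intro h
    exact (hne0 3 (by decide)) (hinj h)
  · rw [← hfq, hq2]
    exact fun h => (hne 3 2 (by decide)) (hinj h)
  · rw [← hfp]; exact hcycH p
  · rw [← hfq, hq2]
    have : p + 1 + 1 = p + 2 := by ring
    have h' := hcycH (p + 1)
    rwa [this] at h'
  · rw [← hfq, hq2]
    have : p + 2 + 1 = p + 3 := by ring
    have h' := hcycH (p + 2)
    rwa [this] at h'
  · rw [← hfp]
    have : p + 3 + 1 = p := by
      have h30 : (3 : ZMod 4) + 1 = 0 := by decide
      rw [add_assoc, h30, add_zero]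
    have h' := hcycH (p + 3)
    rwa [this] at h'
  · intro hab
    have hI : p + 1 ≠ p + 3 := hne 1 3 (by decide)
    have hJ : p + 3 ≠ p + 1 + 1 := by
      have : p + 1 + 1 = p + 2 := by ring
      rw [this]; exact hne 3 2 (by decide)
    have hK : p + 1 ≠ p + 3 + 1 := by
      have : p + 3 + 1 = p := by
        have h30 : (3 : ZMod 4) + 1 = 0 := by decide
        rw [add_assoc, h30, add_zero]
      rw [this]
      exact hne0 1 (by decide)
    rcases hpq _ _ hI hJ hK hab with ⟨h1, _⟩ | ⟨h1, _⟩
    · exact (hne0 1 (by decide)) h1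
    · rw [hq2] at h1
      exact (hne 1 2 (by decide)) h1


/-- reachability avoiding a set -/
def Reach (G : SimpleGraph V) (Ω : Set V) (r x : V) : Prop :=
  ∃ p : G.Walk r x, ∀ z ∈ p.support, z ∉ Ω

lemma reach_refl {G : SimpleGraph V} {Ω : Set V} {r : V} (hr : r ∉ Ω) : Reach G Ω r r :=
  ⟨SimpleGraph.Walk.nil, by simpa using hr⟩

lemma reach_notin {G : SimpleGraph V} {Ω : Set V} {r x : V} (h : Reach G Ω r x) : x ∉ Ω := by
  obtain ⟨p, hp⟩ := h
  exact hp x p.end_mem_support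

lemma reach_start_notin {G : SimpleGraph V} {Ω : Set V} {r x : V} (h : Reach G Ω r x) : r ∉ Ω := by
  obtain ⟨p, hp⟩ := h
  exact hp r p.start_mem_support

lemma reach_adj {G : SimpleGraph V} {Ω : Set V} {r x y : V} (h : Reach G Ω r x)
    (hxy : G.Adj x y) (hy : y ∉ Ω) : Reach G Ω r y := by
  obtain ⟨p, hp⟩ := h
  refine ⟨p.append (SimpleGraph.Walk.cons hxy SimpleGraph.Walk.nil), ?_⟩
  intro z hz
  rw [SimpleGraph.Walk.mem_support_append_iff] at hz
  rcases hz with hz | hz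
  · exact hp z hz
  · simp only [SimpleGraph.Walk.support_cons, SimpleGraph.Walk.support_nil, List.mem_cons,
      List.mem_singleton] at hz
    rcases hz with rfl | rfl | h'
    · exact hp z p.end_mem_support
    · exact hy
    · exact absurd h' (by simp)

lemma reach_trans {G : SimpleGraph V} {Ω : Set V} {r x y : V} (h : Reach G Ω r x)
    (h' : Reach G Ω x y) : Reach G Ω r y := by
  obtain ⟨p, hp⟩ := h
  obtain ⟨q, hq⟩ := h'
  refine ⟨p.append q, ?_⟩
  intro z hz
  rw [SimpleGraph.Walk.mem_support_append_iff] at hz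
  exact hz.elim (hp z) (hq z)

lemma reach_symm {G : SimpleGraph V} {Ω : Set V} {r x : V} (h : Reach G Ω r x) :
    Reach G Ω x r := by
  obtain ⟨p, hp⟩ := h
  exact ⟨p.reverse, fun z hz => hp z (by rwa [SimpleGraph.Walk.support_reverse,
    List.mem_reverse] at hz)⟩

/-- If `H` is a minimal triangulation of `G`, `Ω` a clique of `H`, `v₀ ∉ Ω` and `x ∈ Ω` with
`v₀x` an edge of `H`, then `x` has a `G`-neighbour in the `G`-component of `v₀` w.r.t. `Ω`. -/
lemma fill_into_component {G H : SimpleGraph V} (hmin : IsMinTri G H) {Ω : Set V}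
    (hcl : H.IsClique Ω) {v₀ x : V} (hv₀ : v₀ ∉ Ω) (hx : x ∈ Ω) (hadj : H.Adj v₀ x) :
    ∃ u, Reach G Ω v₀ u ∧ G.Adj u x := by
  by_contra hcon
  push_neg at hcon
  set D : Set V := {y | Reach G Ω v₀ y} with hD
  have hv₀D : v₀ ∈ D := reach_refl hv₀
  have hDΩ : ∀ y ∈ D, y ∉ Ω := fun y hy => reach_notin hy
  have hclosed : ∀ u ∈ D, ∀ z, z ∉ Ω → G.Adj u z → z ∈ D :=
    fun u hu z hz hadj' => reach_adj hu hadj' hz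
  set NgD : Set V := {y | y ∉ D ∧ ∃ u ∈ D, G.Adj u y} with hNgD
  have hNgDΩ : NgD ⊆ Ω := by
    intro y hy
    by_contra hyΩ
    obtain ⟨hyD, u, huD, hadj'⟩ := hy
    exact hyD (hclosed u huD y hyΩ hadj')
  set far : Set V := {y | y ∉ D ∧ y ∉ NgD} with hfar
  have hmem3 : ∀ y, y ∉ D → y ∉ far → y ∈ NgD := by
    intro y h1 h2
    by_contra h3
    exact h2 ⟨h1, h3⟩
  have hxD : x ∉ D := fun h => hDΩ x h hx
  have hxNgD : x ∉ NgD := by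
    rintro ⟨-, u, huD, hadj'⟩
    exact hcon u huD hadj'
  have hxfar : x ∈ far := ⟨hxD, hxNgD⟩
  set Hs : SimpleGraph V :=
    { Adj := fun u w => H.Adj u w ∧ ¬(u ∈ D ∧ w ∈ far) ∧ ¬(w ∈ D ∧ u ∈ far)
      symm := ⟨by
        intro u w h
        exact ⟨h.1.symm, h.2.2, h.2.1⟩⟩
      loopless := ⟨fun u h => H.loopless.irrefl u h.1⟩ } with hHs
  have hle : Hs ≤ H := fun u w h => h.1
  have hGle : G ≤ Hs := by
    intro u w h
    refine ⟨hmin.1.2 h, ?_, ?_⟩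
    · rintro ⟨huD, hwD, hwN⟩
      exact hwN ⟨hwD, u, huD, h⟩
    · rintro ⟨hwD, huD, huN⟩
      exact huN ⟨huD, w, hwD, h.symm⟩
  have hchordal : IsChordal Hs := by
    intro n h4 f hinj hcyc
    have hcycH : ∀ i, H.Adj (f i) (f (i + 1)) := fun i => (hcyc i).1
    by_cases hcaseD : ∀ i, f i ∉ D
    · obtain ⟨i, j, h1, h2, h3, hc⟩ := hmin.1.1 n h4 f hinj hcycH
      exact ⟨i, j, h1, h2, h3, hc, fun h => (hcaseD i) h.1, fun h => (hcaseD j) h.1⟩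
    by_cases hcasef : ∀ i, f i ∉ far
    · obtain ⟨i, j, h1, h2, h3, hc⟩ := hmin.1.1 n h4 f hinj hcycH
      exact ⟨i, j, h1, h2, h3, hc, fun h => (hcasef j) h.2, fun h => (hcasef i) h.2⟩
    push_neg at hcaseD hcasef
    obtain ⟨i₀, hi₀⟩ := hcaseD
    obtain ⟨i₁, hi₁⟩ := hcasef
    haveI : NeZero n := ⟨by omega⟩
    have hi₁D : f i₁ ∉ D := hi₁.1
    have hi₁i₀ : i₁ ≠ i₀ := fun h => hi₁D (h ▸ hi₀)
    have hzero : ∀ m : ℕ, ((m : ℕ) : ZMod n) = 0 → 0 < m → m < n → False := by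
      intro m h h1 h2
      rw [ZMod.natCast_eq_zero_iff] at h
      exact absurd (Nat.le_of_dvd h1 h) (by omega)
    have hvalpos : ∀ z w : ZMod n, z ≠ w → 0 < (z - w).val := by
      intro z w hzw
      rcases Nat.eq_zero_or_pos (z - w).val with h | h
      · exact absurd (sub_eq_zero.mp (zmod_val_eq_zero h)) hzw
      · exact h
    -- search forward
    have hQb : ∃ t : ℕ, 0 < t ∧ f (i₀ + (t : ZMod n)) ∉ D :=
      ⟨(i₁ - i₀).val, hvalpos i₁ i₀ hi₁i₀, by rw [zmod_natCast_val]; simpa using hi₁D⟩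
    have hQa : ∃ s : ℕ, 0 < s ∧ f (i₀ - (s : ZMod n)) ∉ D :=
      ⟨(i₀ - i₁).val, hvalpos i₀ i₁ (Ne.symm hi₁i₀), by rw [zmod_natCast_val]; simpa using hi₁D⟩
    set tb := Nat.find hQb with htb
    set sa := Nat.find hQa with hsa
    obtain ⟨htb0, hfbD⟩ := Nat.find_spec hQb
    obtain ⟨hsa0, hfaD⟩ := Nat.find_spec hQa
    have hDfwd : ∀ t : ℕ, t < tb → f (i₀ + (t : ZMod n)) ∈ D := by
      intro t ht
      rcases Nat.eq_zero_or_pos t with rfl | h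
      · simpa using hi₀
      · by_contra hc
        exact Nat.find_min hQb ht ⟨h, hc⟩
    have hDbwd : ∀ s : ℕ, s < sa → f (i₀ - (s : ZMod n)) ∈ D := by
      intro s hs
      rcases Nat.eq_zero_or_pos s with rfl | h
      · simpa using hi₀
      · by_contra hc
        exact Nat.find_min hQa hs ⟨h, hc⟩
    set b := i₀ + ((tb : ℕ) : ZMod n) with hb
    set a := i₀ - ((sa : ℕ) : ZMod n) with ha
    -- bounds on tb, sa
    have hk₁ : tb ≤ (i₁ - i₀).val := Nat.find_min' hQb
      ⟨hvalpos i₁ i₀ hi₁i₀, by rw [zmod_natCast_val]; simpa using hi₁D⟩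
    have hk₂ : sa ≤ (i₀ - i₁).val := Nat.find_min' hQa
      ⟨hvalpos i₀ i₁ (Ne.symm hi₁i₀), by rw [zmod_natCast_val]; simpa using hi₁D⟩
    have hvi₁ : (i₁ - i₀).val < n := ZMod.val_lt _
    have hvi₂ : (i₀ - i₁).val < n := ZMod.val_lt _
    have hsumk : (i₁ - i₀).val + (i₀ - i₁).val = n := by
      have h1 : i₀ - i₁ = -(i₁ - i₀) := by ring
      have h2 : i₁ - i₀ ≠ 0 := sub_ne_zero.mpr hi₁i₀
      rw [h1, zmod_val_neg _ h2]
      have := hvalpos i₁ i₀ hi₁i₀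
      omega
    -- flanks are not in far
    have hfbfar : f b ∉ far := by
      have hprev : f (i₀ + ((tb - 1 : ℕ) : ZMod n)) ∈ D := hDfwd (tb - 1) (by omega)
      have hstep : (i₀ + ((tb - 1 : ℕ) : ZMod n)) + 1 = b := by
        rw [hb]
        have : ((tb - 1 : ℕ) : ZMod n) + 1 = ((tb : ℕ) : ZMod n) := by
          rw [show (tb : ℕ) = (tb - 1) + 1 by omega]
          push_cast
          ring
        rw [add_assoc, this]
      have hedge := hcyc (i₀ + ((tb - 1 : ℕ) : ZMod n))
      rw [hstep] at hedge
      intro hfbf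
      exact hedge.2.1 ⟨hprev, hfbf⟩
    have hfafar : f a ∉ far := by
      have hnext : f (a + 1) ∈ D := by
        have : a + 1 = i₀ - ((sa - 1 : ℕ) : ZMod n) := by
          rw [ha]
          have : ((sa : ℕ) : ZMod n) = ((sa - 1 : ℕ) : ZMod n) + 1 := by
            rw [show (sa : ℕ) = (sa - 1) + 1 by omega]
            push_cast
            ring
          rw [this]
          ring
        rw [this]
        exact hDbwd (sa - 1) (by omega)
      have hedge := hcyc a
      intro hfaf
      exact hedge.2.2 ⟨hnext, hfaf⟩
    -- exclude i₁ = a or b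
    have hi₁b : i₁ ≠ b := fun h => hfbfar (h ▸ hi₁)
    have hi₁a : i₁ ≠ a := fun h => hfafar (h ▸ hi₁)
    have htblt : tb < (i₁ - i₀).val := by
      rcases Nat.lt_or_ge tb (i₁ - i₀).val with h | h
      · exact h
      · exfalso
        apply hi₁b
        rw [hb, show tb = (i₁ - i₀).val by omega, zmod_natCast_val]
        ring
    have hsalt : sa < (i₀ - i₁).val := by
      rcases Nat.lt_or_ge sa (i₀ - i₁).val with h | h
      · exact h
      · exfalso
        apply hi₁a
        rw [ha, show sa = (i₀ - i₁).val by omega, zmod_natCast_val]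
        ring
    have hsum : 2 ≤ sa + tb ∧ sa + tb ≤ n - 2 := ⟨by omega, by omega⟩
    -- the chord
    have hfaNgD : f a ∈ Ω := hNgDΩ (hmem3 _ hfaD hfafar)
    have hfbNgD : f b ∈ Ω := hNgDΩ (hmem3 _ hfbD hfbfar)
    have hab : a ≠ b := by
      intro h
      rw [ha, hb] at h
      have : ((sa + tb : ℕ) : ZMod n) = 0 := by
        push_cast
        linear_combination -h
      exact hzero _ this (by omega) (by omega)
    have hba1 : b ≠ a + 1 := by
      intro h
      rw [ha, hb] at h
      have : ((sa + tb - 1 : ℕ) : ZMod n) = 0 := by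
        push_cast [Nat.cast_sub (show 1 ≤ sa + tb by omega)]
        linear_combination h
      exact hzero _ this (by omega) (by omega)
    have hab1 : a ≠ b + 1 := by
      intro h
      rw [ha, hb] at h
      have : ((sa + tb + 1 : ℕ) : ZMod n) = 0 := by
        push_cast
        linear_combination -h
      exact hzero _ this (by omega) (by omega)
    refine ⟨a, b, hab, hba1, hab1, ?_⟩
    refine ⟨hcl hfaNgD hfbNgD (fun h => hab (hinj h)), ?_, ?_⟩
    · rintro ⟨h1, -⟩; exact hfaD h1
    · rintro ⟨h1, -⟩; exact hfbD h1
  have heq : Hs = H := hmin.2 Hs ⟨hchordal, hGle⟩ hle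
  have : Hs.Adj v₀ x := heq ▸ hadj
  exact this.2.1 ⟨hv₀D, hxfar⟩


/-! ### new material -/

lemma walk_mono {G H : SimpleGraph V} (hle : G ≤ H) {x y : V} (p : G.Walk x y) :
    ∃ q : H.Walk x y, q.support = p.support := by
  induction p with
  | nil => exact ⟨SimpleGraph.Walk.nil, rfl⟩
  | cons h p ih =>
    obtain ⟨q, hq⟩ := ih
    exact ⟨SimpleGraph.Walk.cons (hle h) q, by simp [hq]⟩

lemma reach_support {G : SimpleGraph V} {Ω : Set V} {v x y : V} (hx : Reach G Ω v x)
    (p : G.Walk x y) (hp : ∀ z ∈ p.support, z ∉ Ω) : ∀ z ∈ p.support, Reach G Ω v z := by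
  induction p with
  | nil =>
    intro z hz
    rw [SimpleGraph.Walk.mem_support_nil_iff] at hz
    exact hz ▸ hx
  | @cons u w y h q ih =>
    intro z hz
    rw [SimpleGraph.Walk.support_cons, List.mem_cons] at hz
    rcases hz with rfl | hz
    · exact hx
    · have hw : w ∉ Ω := by
        apply hp
        rw [SimpleGraph.Walk.support_cons]
        exact List.mem_cons_of_mem _ q.start_mem_support
      refine ih (reach_adj hx h hw) (fun t ht => hp t ?_) z hz
      rw [SimpleGraph.Walk.support_cons]
      exact List.mem_cons_of_mem _ ht

/-- `Ω` and `Ω ∪ {v}` cannot both be PMCs of `G`. -/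
lemma not_both [Fintype V] {G : SimpleGraph V} {v : V} {Ω : Set V} (hv : v ∉ Ω)
    (hA : IsPMC G Ω) (hB : IsPMC G (insert v Ω)) : False := by
  obtain ⟨H₁, hmin₁, hclq₁, hmax₁⟩ := hA
  obtain ⟨H₂, hmin₂, hclq₂, hmax₂⟩ := hB
  set Cv : Set V := {w | Reach G Ω v w} with hCv
  have hvCv : v ∈ Cv := reach_refl hv
  -- Step 1: some x ∈ Ω has no G-neighbour in Cv
  have hx : ∃ x ∈ Ω, ∀ u ∈ Cv, ¬G.Adj u x := by
    by_contra hc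
    push_neg at hc
    have hconn : ∀ x ∈ Cv, ∀ y ∈ Cv, ∃ p : H₁.Walk x y, ∀ z ∈ p.support, z ∈ Cv := by
      intro x hx y hy
      have hreach : Reach G Ω x y := reach_trans (reach_symm hx) hy
      obtain ⟨p, hp⟩ := hreach
      obtain ⟨q, hq⟩ := walk_mono hmin₁.1.2 p
      refine ⟨q, fun z hz => ?_⟩
      rw [hq] at hz
      exact reach_support hx p hp z hz
    obtain ⟨u, huCv, hu⟩ := chordal_full hmin₁.1.1 Ω Cv ⟨v, hvCv⟩ hconn
      (fun z hz => reach_notin hz) hclq₁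
      (fun k hk => by
        obtain ⟨u, huC, hadj⟩ := hc k hk
        exact ⟨u, huC, hmin₁.1.2 hadj⟩)
    have hclq' : H₁.IsClique (insert u Ω) :=
      hclq₁.insert (fun b hb hne => hu b hb)
    have := hmax₁ (insert u Ω) hclq' (Set.subset_insert u Ω)
    exact reach_notin huCv (this ▸ Set.mem_insert u Ω)
  obtain ⟨x, hxΩ, hxn⟩ := hx
  have hvx : v ≠ x := fun h => hv (h ▸ hxΩ)
  have hH₂vx : H₂.Adj v x := hclq₂ (Set.mem_insert v Ω) (Set.mem_insert_of_mem v hxΩ) hvx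
  have hGvx : ¬G.Adj v x := fun h => hxn v hvCv h
  obtain ⟨a, b, hab, has, hat, hbs, hbt, hva, hax, hxb, hbv, hnab⟩ :=
    square_of_fill hmin₂ hH₂vx hGvx
  set Ω' : Set V := insert v Ω with hΩ'
  have key : ∀ c, H₂.Adj c v → H₂.Adj c x → c ∉ Ω' → False := by
    intro c hcv hcx hcΩ'
    obtain ⟨u₁, hu₁r, hu₁x⟩ := fill_into_component hmin₂ hclq₂ hcΩ'
      (Set.mem_insert_of_mem v hxΩ) hcx
    obtain ⟨u₂, hu₂r, hu₂v⟩ := fill_into_component hmin₂ hclq₂ hcΩ'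
      (Set.mem_insert v Ω) hcv
    have hmono : ∀ z w : V, Reach G Ω' z w → Reach G Ω z w := by
      rintro z w ⟨p, hp⟩
      exact ⟨p, fun t ht htΩ => hp t ht (Set.mem_insert_of_mem v htΩ)⟩
    have hv2 : Reach G Ω v u₂ :=
      reach_adj (reach_refl hv) hu₂v.symm (reach_notin (hmono _ _ hu₂r))
    have hu₁Cv : Reach G Ω v u₁ :=
      reach_trans hv2 (reach_trans (reach_symm (hmono _ _ hu₂r)) (hmono _ _ hu₁r))
    exact hxn u₁ hu₁Cv hu₁x
  by_cases haΩ' : a ∈ Ω'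
  · by_cases hbΩ' : b ∈ Ω'
    · exact hnab (hclq₂ haΩ' hbΩ' hab)
    · exact key b hbv hxb.symm hbΩ'
  · exact key a hva.symm hax haΩ'

/-- a triangulation contains a minimal triangulation -/
lemma exists_minTri_le_aux [Fintype V] {G : SimpleGraph V} :
    ∀ (N : ℕ) (H₂ : SimpleGraph V), H₂.edgeSet.ncard ≤ N → IsTri G H₂ →
      ∃ H, H ≤ H₂ ∧ IsMinTri G H := by
  intro N
  induction N with
  | zero =>
    intro H₂ hcard htri
    by_cases hmin : ∀ H' : SimpleGraph V, IsTri G H' → H' ≤ H₂ → H' = H₂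
    · exact ⟨H₂, le_rfl, htri, hmin⟩
    · push_neg at hmin
      obtain ⟨H', htri', hle, hne⟩ := hmin
      have hlt : H' < H₂ := lt_of_le_of_ne hle hne
      have := Set.ncard_lt_ncard (SimpleGraph.edgeSet_ssubset_edgeSet.mpr hlt) (Set.toFinite _)
      omega
  | succ N ih =>
    intro H₂ hcard htri
    by_cases hmin : ∀ H' : SimpleGraph V, IsTri G H' → H' ≤ H₂ → H' = H₂
    · exact ⟨H₂, le_rfl, htri, hmin⟩
    · push_neg at hmin
      obtain ⟨H', htri', hle, hne⟩ := hmin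
      have hlt : H' < H₂ := lt_of_le_of_ne hle hne
      have hcard' := Set.ncard_lt_ncard (SimpleGraph.edgeSet_ssubset_edgeSet.mpr hlt)
        (Set.toFinite _)
      obtain ⟨H, hH, hminH⟩ := ih H' (by omega) htri'
      exact ⟨H, hH.trans hle, hminH⟩

lemma exists_minTri_le [Fintype V] {G H₂ : SimpleGraph V} (htri : IsTri G H₂) :
    ∃ H, H ≤ H₂ ∧ IsMinTri G H :=
  exists_minTri_le_aux H₂.edgeSet.ncard H₂ le_rfl htri

lemma exists_isMaxClique_superset [Fintype V] (H : SimpleGraph V) (C : Set V)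
    (hC : H.IsClique C) : ∃ M, C ⊆ M ∧ IsMaxClique H M := by
  obtain ⟨M, hM, hmax⟩ := Set.Finite.exists_maximalFor id {Ω' | H.IsClique Ω' ∧ C ⊆ Ω'}
    (Set.toFinite _) ⟨C, hC, subset_rfl⟩
  exact ⟨M, hM.2, hM.1, fun Ω' hcl hsub => le_antisymm (hmax ⟨hcl, hM.2.trans hsub⟩ hsub) hsub⟩


/-- If `Ω` is a PMC of the induced subgraph `G \ {v}`, then exactly one
of `Ω` and `Ω ∪ {v}` is a PMC of `G`. -/
theorem pmc_induced {V : Type*} [Fintype V] [DecidableEq V] (G : SimpleGraph V) (v : V)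
    (Ω : Set ↥({v}ᶜ : Set V)) (hΩ : IsPMC (G.induce ({v}ᶜ : Set V)) Ω) :
    Xor' (IsPMC G (Subtype.val '' Ω)) (IsPMC G (insert v (Subtype.val '' Ω))) := by
  obtain ⟨H', hminH', hmaxΩ⟩ := hΩ
  set Ωl : Set V := Subtype.val '' Ω with hΩl
  have hvΩl : v ∉ Ωl := by
    rintro ⟨a, ha, hav⟩
    exact a.2 hav
  -- lift H' to V
  set H₀ : SimpleGraph V := SimpleGraph.map (Function.Embedding.subtype _) H' with hH₀
  have hH₀adj : ∀ u w : V, H₀.Adj u w ↔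
      ∃ (hu : u ∈ ({v}ᶜ : Set V)) (hw : w ∈ ({v}ᶜ : Set V)), H'.Adj ⟨u, hu⟩ ⟨w, hw⟩ := by
    intro u w
    constructor
    · rintro ⟨-, u', w', hadj, rfl, rfl⟩
      exact ⟨u'.2, w'.2, hadj⟩
    · rintro ⟨hu, hw, hadj⟩
      exact ⟨fun h => H'.ne_of_adj hadj (Subtype.ext h), ⟨u, hu⟩, ⟨w, hw⟩, hadj, rfl, rfl⟩
  have hH₀v : ∀ u w : V, H₀.Adj u w → u ≠ v ∧ w ≠ v := by
    intro u w h
    rw [hH₀adj] at h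
    obtain ⟨hu, hw, -⟩ := h
    exact ⟨hu, hw⟩
  -- universal extension
  set H₂ : SimpleGraph V :=
    { Adj := fun u w => H₀.Adj u w ∨ (u ≠ w ∧ (u = v ∨ w = v))
      symm := ⟨by
        intro u w h
        rcases h with h | ⟨h1, h2⟩
        · exact Or.inl h.symm
        · exact Or.inr ⟨h1.symm, h2.symm⟩⟩
      loopless := ⟨by
        intro u h
        rcases h with h | ⟨h1, -⟩
        · exact H₀.loopless.irrefl u h
        · exact h1 rfl⟩ } with hH₂
  have hH₂restrict : ∀ u w : ↥({v}ᶜ : Set V), (H₂.Adj ↑u ↑w ↔ H'.Adj u w) := by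
    intro u w
    constructor
    · intro h
      rcases h with h | ⟨-, h | h⟩
      · rw [hH₀adj] at h
        obtain ⟨hu, hw, hadj⟩ := h
        convert hadj <;> exact rfl
      · exact absurd h u.2
      · exact absurd h w.2
    · intro h
      exact Or.inl ((hH₀adj _ _).mpr ⟨u.2, w.2, by simpa using h⟩)
  have hGle : G ≤ H₂ := by
    intro u w h
    by_cases hu : u = v
    · exact Or.inr ⟨h.ne, Or.inl hu⟩
    by_cases hw : w = v
    · exact Or.inr ⟨h.ne, Or.inr hw⟩
    exact Or.inl ((hH₀adj _ _).mpr ⟨hu, hw, hminH'.1.2 h⟩)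
  -- H₀ is chordal
  have hH₀chordal : IsChordal H₀ := by
    intro n h4 f hinj hcyc
    have hfS : ∀ i, f i ∈ ({v}ᶜ : Set V) := by
      intro i
      haveI : NeZero n := ⟨by omega⟩
      have h := hcyc i
      exact (hH₀v _ _ h).1
    set g : ZMod n → ↥({v}ᶜ : Set V) := fun i => ⟨f i, hfS i⟩ with hg
    have hginj : Function.Injective g := fun i j h => hinj (congrArg Subtype.val h)
    have hgcyc : ∀ i, H'.Adj (g i) (g (i + 1)) := by
      intro i
      have h := hcyc i
      rw [hH₀adj] at h
      obtain ⟨hu, hw, hadj⟩ := h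
      exact hadj
    obtain ⟨i, j, h1, h2, h3, hc⟩ := hminH'.1.1 n h4 g hginj hgcyc
    exact ⟨i, j, h1, h2, h3, (hH₀adj _ _).mpr ⟨(g i).2, (g j).2, hc⟩⟩
  -- H₂ is chordal
  have hH₂chordal : IsChordal H₂ := by
    intro n h4 f hinj hcyc
    haveI : NeZero n := ⟨by omega⟩
    have hzero : ∀ m : ℕ, 0 < m → m < 4 → ((m : ℕ) : ZMod n) ≠ 0 := by
      intro m h1 h2 h
      rw [ZMod.natCast_eq_zero_iff] at h
      exact absurd (Nat.le_of_dvd h1 h) (by omega)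
    by_cases hv' : ∃ i₀, f i₀ = v
    · obtain ⟨i₀, hi₀⟩ := hv'
      refine ⟨i₀, i₀ + 2, ?_, ?_, ?_, ?_⟩
      · intro h
        have h2 : ((2 : ℕ) : ZMod n) = 0 := by push_cast; linear_combination -h
        exact hzero 2 (by omega) (by omega) h2
      · intro h
        have h1 : ((1 : ℕ) : ZMod n) = 0 := by push_cast; linear_combination h
        exact hzero 1 (by omega) (by omega) h1
      · intro h
        have h3 : ((3 : ℕ) : ZMod n) = 0 := by push_cast; linear_combination -h
        exact hzero 3 (by omega) (by omega) h3
      · have hne : f i₀ ≠ f (i₀ + 2) := by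
          intro h
          have := hinj h
          have h2 : ((2 : ℕ) : ZMod n) = 0 := by push_cast; linear_combination -this
          exact hzero 2 (by omega) (by omega) h2
        exact Or.inr ⟨hne, Or.inl hi₀⟩
    · push_neg at hv'
      have hcyc₀ : ∀ i, H₀.Adj (f i) (f (i + 1)) := by
        intro i
        rcases hcyc i with h | ⟨-, h | h⟩
        · exact h
        · exact absurd h (hv' i)
        · exact absurd h (hv' (i + 1))
      obtain ⟨i, j, h1, h2, h3, hc⟩ := hH₀chordal n h4 f hinj hcyc₀
      exact ⟨i, j, h1, h2, h3, Or.inl hc⟩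
  -- minimal triangulation of G below H₂
  obtain ⟨H, hHle, hminH⟩ := exists_minTri_le ⟨hH₂chordal, hGle⟩
  -- restriction of H to S equals H'
  set Hr : SimpleGraph ↥({v}ᶜ : Set V) := SimpleGraph.comap (Subtype.val) H with hHr
  have hHradj : ∀ u w : ↥({v}ᶜ : Set V), (Hr.Adj u w ↔ H.Adj ↑u ↑w) := fun u w => Iff.rfl
  have hHrchordal : IsChordal Hr := by
    intro n h4 g hginj hgcyc
    obtain ⟨i, j, h1, h2, h3, hc⟩ := hminH.1.1 n h4 (fun i => ↑(g i))
      (fun i j h => hginj (Subtype.ext h)) hgcyc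
    exact ⟨i, j, h1, h2, h3, hc⟩
  have hHrle : Hr ≤ H' := by
    intro u w h
    exact (hH₂restrict u w).mp (hHle h)
  have hG'le : G.induce ({v}ᶜ : Set V) ≤ Hr := by
    intro u w h
    exact hminH.1.2 (by simpa using h)
  have hHreq : Hr = H' := hminH'.2 Hr ⟨hHrchordal, hG'le⟩ hHrle
  -- Ωl is a clique of H
  have hΩlclq : H.IsClique Ωl := by
    rintro u ⟨a, ha, rfl⟩ w ⟨b, hb, rfl⟩ hne
    have hab : a ≠ b := fun h => hne (congrArg Subtype.val h)
    have := hmaxΩ.1 ha hb hab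
    rw [← hHreq] at this
    exact this
  obtain ⟨M, hΩlM, hMclq, hMmax⟩ := exists_isMaxClique_superset H Ωl hΩlclq
  -- M ∩ S = Ω
  have hT : {a : ↥({v}ᶜ : Set V) | ↑a ∈ M} = Ω := by
    apply hmaxΩ.2
    · intro a ha b hb hab
      rw [← hHreq]
      exact hMclq ha hb (fun h => hab (Subtype.ext h))
    · intro a ha
      exact hΩlM ⟨a, ha, rfl⟩
  have hMsub : ∀ y ∈ M, y ≠ v → y ∈ Ωl := by
    intro y hy hyv
    have hyS : y ∈ ({v}ᶜ : Set V) := hyv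
    have : (⟨y, hyS⟩ : ↥({v}ᶜ : Set V)) ∈ Ω := by rw [← hT]; exact hy
    exact ⟨⟨y, hyS⟩, this, rfl⟩
  by_cases hvM : v ∈ M
  · have hMeq : M = insert v Ωl := by
      apply Set.eq_of_subset_of_subset
      · intro y hy
        by_cases hyv : y = v
        · exact hyv ▸ Set.mem_insert v Ωl
        · exact Set.mem_insert_of_mem v (hMsub y hy hyv)
      · intro y hy
        rcases hy with rfl | hy
        · exact hvM
        · exact hΩlM hy
    have hPMC : IsPMC G (insert v Ωl) := ⟨H, hminH, hMeq ▸ ⟨hMclq, hMmax⟩⟩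
    exact Or.inr ⟨hPMC, fun hA => not_both hvΩl hA hPMC⟩
  · have hMeq : M = Ωl := by
      apply Set.eq_of_subset_of_subset
      · intro y hy
        exact hMsub y hy (fun h => hvM (h ▸ hy))
      · exact hΩlM
    have hPMC : IsPMC G Ωl := ⟨H, hminH, hMeq ▸ ⟨hMclq, hMmax⟩⟩
    exact Or.inl ⟨hPMC, fun hB => not_both hvΩl hPMC hB⟩


end PaperECC
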